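/- Let μ be an instance of REP over Σ with words u_start, u_end and rules w_i → w'_i for 1 ≤ i ≤ n, and let h be an overlapping solution of α_μ = β_μ with associated words v_1,…,v_n and suffixes y_1,…,y_n (where y_i is the suffix of h(x_i) of length |v_i| − |w_i|), and set v_{n+1} := y_n w'_n. Then for every 1 ≤ i ≤ n the word y_i w_i is a conjugate of v_i, and for every 1 ≤ i ≤ n+1 the word v_i contains exactly one occurrence of the letter #. -/

import Mathlib

/-!
Framework for REP (Rewriting with Programmed Rules) and the associated word
equations α_μ = β_μ.  Constants: `Option A` models Σ ∪ {#}, where `none` is the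
fresh letter `#` and `some a` embeds a ∈ Σ.  Variables are modelled by `ℕ`
(the variable x_i is `i`).
-/

namespace REP

/-- `u_end` is obtained from `u_start` by applying each of the `n` rules
`w i → w' i` (for `i = 1, …, n`) once, in order, each application replacing one
occurrence of `w i` by `w' i`. -/
def SatisfiesREP {A : Type} (n : ℕ) (ustart uend : List A) (w w' : ℕ → List A) : Prop :=
  ∃ u : ℕ → List A, u 0 = ustart ∧ u n = uend ∧
    ∀ i, 1 ≤ i → i ≤ n → ∃ s t : List A,
      u (i - 1) = s ++ w i ++ t ∧ u i = s ++ w' i ++ t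

/-- Apply a substitution (identity on constants) to a pattern. -/
def applySub {A : Type} (h : ℕ → List (Option A)) : List (Option A ⊕ ℕ) → List (Option A)
  | [] => []
  | Sum.inl a :: rest => a :: applySub h rest
  | Sum.inr x :: rest => h x ++ applySub h rest

/-- Embed a constant word over Σ into patterns over Σ ∪ {#}. -/
def lift {A : Type} (u : List A) : List (Option A ⊕ ℕ) := u.map (fun a => Sum.inl (some a))

/-- Embed a constant word over Σ into words over Σ ∪ {#}. -/
def liftW {A : Type} (u : List A) : List (Option A) := u.map some

/-- The fresh letter `#` as a pattern symbol. -/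
def hash {A : Type} : Option A ⊕ ℕ := Sum.inl none

/-- `x_1 w_1 x_2 w_2 ⋯ x_n w_n`. -/
def blocks {A : Type} (w : ℕ → List A) : ℕ → List (Option A ⊕ ℕ)
  | 0 => []
  | n + 1 => blocks w n ++ (Sum.inr (n + 1) :: lift (w (n + 1)))

/-- α_μ = `x_1 w_1 x_2 w_2 ⋯ x_n w_n x_{n+1} # u_end`. -/
def alphaMu {A : Type} (n : ℕ) (uend : List A) (w : ℕ → List A) : List (Option A ⊕ ℕ) :=
  blocks w n ++ [Sum.inr (n + 1), hash] ++ lift uend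

/-- β_μ = `# u_start x_1 w'_1 x_2 w'_2 ⋯ x_n w'_n x_{n+1}`. -/
def betaMu {A : Type} (n : ℕ) (ustart : List A) (w' : ℕ → List A) : List (Option A ⊕ ℕ) :=
  hash :: lift ustart ++ blocks w' n ++ [Sum.inr (n + 1)]

/-- `x_1 w_1 ⋯ x_i w_i`. -/
def alphaPrefix {A : Type} (w : ℕ → List A) (i : ℕ) : List (Option A ⊕ ℕ) := blocks w i

/-- `# u_start x_1 w'_1 ⋯ w'_{i-1} x_i`. -/
def betaPrefix {A : Type} (ustart : List A) (w' : ℕ → List A) (i : ℕ) :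
    List (Option A ⊕ ℕ) :=
  hash :: lift ustart ++ blocks w' (i - 1) ++ [Sum.inr i]

/-- `h` is a solution of the equation α = β. -/
def IsSolution {A : Type} (h : ℕ → List (Option A)) (α β : List (Option A ⊕ ℕ)) : Prop :=
  applySub h α = applySub h β

/-- `h` is an overlapping solution of α_μ = β_μ : it is a solution and, for every
`1 ≤ i ≤ n`, there is `z_i` such that `w_i z_i` is a suffix of `h(x_i)` and
`h(# u_start x_1 w'_1 ⋯ w'_{i-1} x_i) = h(x_1 w_1 ⋯ x_i w_i) z_i`. -/
def OverlappingSolution {A : Type} (n : ℕ) (ustart uend : List A) (w w' : ℕ → List A)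
    (h : ℕ → List (Option A)) : Prop :=
  IsSolution h (alphaMu n uend w) (betaMu n ustart w') ∧
  ∀ i, 1 ≤ i → i ≤ n → ∃ z : List (Option A),
    (liftW (w i) ++ z) <:+ h i ∧
    applySub h (betaPrefix ustart w' i) = applySub h (alphaPrefix w i) ++ z

/-- `n`-fold concatenation `u^n` of the word `u`. -/
def npow {A : Type} (u : List A) : ℕ → List A
  | 0 => []
  | n + 1 => u ++ npow u n

/-- `y_i`, the suffix of `h(x_i)` of length `|v_i| - |w_i|`. -/
def ySuf {A : Type} (h : ℕ → List (Option A)) (v : ℕ → List (Option A)) (w : ℕ → List A)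
    (i : ℕ) : List (Option A) :=
  (h i).drop ((h i).length - ((v i).length - (w i).length))

/-- Two words are conjugate if `u = st` and `v = ts` for some words `s`, `t`. -/
def Conj {B : Type} (u v : List B) : Prop := ∃ s t : List B, u = s ++ t ∧ v = t ++ s

/-- The words `v_1, …, v_n` associated with an overlapping solution `h`
(as guaranteed by the characterisation of overlapping solutions):
`v_i` is a prefix of `h(x_i)`, `|w_i| ≤ |v_i|`, `h(x_i) w_i` is a prefix of `v_i^ω`
(i.e. of `v_i^m` for all sufficiently large `m`), `v_1 = # u_start`,
`v_i = y_{i-1} w'_{i-1}` for `2 ≤ i ≤ n`, and `y_n w'_n h(x_{n+1}) = h(x_{n+1}) # u_end`. -/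
def AssocWords {A : Type} (n : ℕ) (ustart uend : List A) (w w' : ℕ → List A)
    (h : ℕ → List (Option A)) (v : ℕ → List (Option A)) : Prop :=
  (∀ i, 1 ≤ i → i ≤ n →
    v i <+: h i ∧ (w i).length ≤ (v i).length ∧
    ∃ N : ℕ, ∀ m : ℕ, N ≤ m → (h i ++ liftW (w i)) <+: npow (v i) m) ∧
  v 1 = none :: liftW ustart ∧
  (∀ i, 2 ≤ i → i ≤ n → v i = ySuf h v w (i - 1) ++ liftW (w' (i - 1))) ∧
  ySuf h v w n ++ liftW (w' n) ++ h (n + 1) = h (n + 1) ++ none :: liftW uend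

end REP

/-!
STATEMENT 5: for an overlapping solution h of α_μ = β_μ with associated words
v_1, …, v_n (and v_{n+1} := y_n w'_n): for 1 ≤ i ≤ n the word y_i w_i is a
conjugate of v_i, and for 1 ≤ i ≤ n+1 the word v_i contains exactly one
occurrence of the letter # (modelled by `none`).
-/


open REP

lemma npow_succ' {B : Type} (v : List B) (m : ℕ) :
    npow v (m + 1) = v ++ npow v m := rfl

lemma prefix_pow_suffix_conj {B : Type} :
    ∀ (m : ℕ) (v u : List B), u <+: npow v m → v.length ≤ u.length →
      Conj (u.drop (u.length - v.length)) v := by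
  intro m
  induction m with
  | zero =>
    intro v u hp hl
    have hu : u = [] := List.prefix_nil.mp hp
    subst hu
    have hv : v = [] := List.eq_nil_of_length_eq_zero (Nat.le_zero.mp hl)
    subst hv
    exact ⟨[], [], rfl, rfl⟩
  | succ m ih =>
    intro v u hp hl
    obtain ⟨t, ht⟩ := hp
    rw [npow_succ'] at ht
    have hvu : v = u.take v.length := by
      have := congrArg (List.take v.length) ht
      rw [List.take_append_of_le_length hl, List.take_append_of_le_length le_rfl,
        List.take_length] at this
      exact this.symm
    by_cases hle : u.length ≤ v.length
    · have huv : u = v := by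
        rw [hvu, List.take_of_length_le hle]
      subst huv
      simp only [Nat.sub_self, List.drop_zero]
      exact ⟨u, [], by simp, by simp⟩
    · push_neg at hle
      set u' := u.drop v.length with hu'
      have hsplit : u = v ++ u' := by
        rw [hvu, hu', List.take_append_drop]
      have hu'len : u'.length = u.length - v.length := by
        simp [hu']
      have hpre' : u' <+: npow v m := by
        refine ⟨t, ?_⟩
        have := congrArg (List.drop v.length) ht
        rwa [List.drop_append_of_le_length hl, List.drop_left] at this
      by_cases h2 : v.length ≤ u'.length
      · have hconj := ih v u' hpre' h2
        have hdrop : u.drop (u.length - v.length) = u'.drop (u'.length - v.length) := by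
          rw [hsplit]
          have he : (v ++ u').length - v.length = v.length + (u'.length - v.length) := by
            simp only [List.length_append]; omega
          rw [he, List.drop_append]
          simp
        rw [hdrop]
        exact hconj
      · push_neg at h2
        have hm : 1 ≤ m := by
          by_contra hm0
          push_neg at hm0
          interval_cases m
          have hu0 : u' = [] := List.prefix_nil.mp hpre'
          rw [hu0] at hu'len
          simp at hu'len
          omega
        have hu'v : u' = v.take u'.length := by
          obtain ⟨m', rfl⟩ := Nat.exists_eq_add_of_le hm
          obtain ⟨s, hs⟩ := hpre'
          have hnp : npow v (1 + m') = v ++ npow v m' := by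
            rw [Nat.add_comm]; rfl
          rw [hnp] at hs
          have := congrArg (List.take u'.length) hs
          rw [List.take_append_of_le_length le_rfl, List.take_length,
            List.take_append_of_le_length (le_of_lt h2)] at this
          exact this
        have hdrop : u.drop (u.length - v.length) = v.drop u'.length ++ u' := by
          rw [hsplit]
          have he : (v ++ u').length - v.length = u'.length := by
            simp only [List.length_append]; omega
          rw [he, List.drop_append_of_le_length (le_of_lt h2)]
        rw [hdrop]
        exact ⟨v.drop u'.length, v.take u'.length, by rw [← hu'v],
          by rw [List.take_append_drop]⟩

lemma conj_count {B : Type} [BEq B] {u v : List B} (hc : Conj u v) (a : B) :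
    u.count a = v.count a := by
  obtain ⟨s, t, rfl, rfl⟩ := hc
  simp [List.count_append, Nat.add_comm]

lemma count_liftW {A : Type} [BEq (Option A)] [LawfulBEq (Option A)] (u : List A) :
    (liftW u).count (none : Option A) = 0 := by
  rw [List.count_eq_zero]
  simp [liftW]

open REP in
theorem stmt5 (A : Type) [DecidableEq A] (n : ℕ) (hn : 1 ≤ n)
    (ustart uend : List A) (w w' : ℕ → List A)
    (h : ℕ → List (Option A)) (v : ℕ → List (Option A))
    (hover : OverlappingSolution n ustart uend w w' h)
    (hv : AssocWords n ustart uend w w' h v) :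
    (∀ i, 1 ≤ i → i ≤ n → Conj (ySuf h v w i ++ liftW (w i)) (v i)) ∧
    (∀ i, 1 ≤ i → i ≤ n + 1 →
      ((if i = n + 1 then ySuf h v w n ++ liftW (w' n) else v i).count
        (none : Option A)) = 1) := by
  obtain ⟨hassoc, hv1, hvmid, hvlast⟩ := hv
  have hconj : ∀ i, 1 ≤ i → i ≤ n → Conj (ySuf h v w i ++ liftW (w i)) (v i) := by
    intro i h1 h2
    obtain ⟨hpre, hlen, N, hN⟩ := hassoc i h1 h2
    have hp := hN N le_rfl
    have hlh : (v i).length ≤ (h i).length := hpre.length_le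
    have hlw : (liftW (w i)).length = (w i).length := by simp [liftW]
    have hl : (v i).length ≤ (h i ++ liftW (w i)).length := by
      simp only [List.length_append]; omega
    have hc := prefix_pow_suffix_conj N (v i) _ hp hl
    have hdrop : (h i ++ liftW (w i)).drop ((h i ++ liftW (w i)).length - (v i).length)
        = ySuf h v w i ++ liftW (w i) := by
      unfold ySuf
      have he : (h i ++ liftW (w i)).length - (v i).length
          = (h i).length - ((v i).length - (w i).length) := by
        simp only [List.length_append]; omega
      rw [he, List.drop_append_of_le_length (by omega)]
    rwa [hdrop] at hc
  refine ⟨hconj, ?_⟩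
  have hcount : ∀ i, 1 ≤ i → i ≤ n → (v i).count (none : Option A) = 1 := by
    intro i
    induction i with
    | zero => omega
    | succ j ihj =>
      intro _ hle
      by_cases hj : j = 0
      · subst hj
        rw [hv1]
        simp [count_liftW, List.count_cons]
      · have hj1 : 1 ≤ j := by omega
        have hjn : j ≤ n := by omega
        have hvj := hvmid (j+1) (by omega) hle
        simp only [Nat.add_sub_cancel] at hvj
        have hcc := conj_count (hconj j hj1 hjn) (none : Option A)
        rw [List.count_append, count_liftW, ihj hj1 hjn] at hcc
        rw [hvj, List.count_append, count_liftW]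
        omega
  intro i h1 h2
  by_cases hi : i = n + 1
  · rw [if_pos hi]
    have hcc := conj_count (hconj n hn le_rfl) (none : Option A)
    rw [List.count_append, count_liftW, hcount n hn le_rfl] at hcc
    rw [List.count_append, count_liftW]
    omega
  · rw [if_neg hi]
    exact hcount i h1 (by omega)
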